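/- For any connected vertex transitive digraph D on at least 2 vertices, the cycle graph C(D) is nearly transitive: for any two vertices C_1, C_2 of C(D), there exists an automorphism of C(D) mapping C_1 to C_2 or to a neighbor of C_2. -/

import Mathlib

/-- A digraph is vertex transitive if for any two vertices `u, v` there is an
automorphism of the digraph mapping `u` to `v`. -/
def Digraph.IsVertexTransitive {V : Type*} (D : Digraph V) : Prop :=
  ∀ u v : V, ∃ e : V ≃ V, (∀ x y, D.Adj (e x) (e y) ↔ D.Adj x y) ∧ e u = v

/-- The underlying undirected (simple) graph of a digraph. -/
def Digraph.underlying {V : Type*} (D : Digraph V) : SimpleGraph V where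
  Adj x y := x ≠ y ∧ (D.Adj x y ∨ D.Adj y x)
  symm := ⟨fun x y h => ⟨h.1.symm, h.2.symm⟩⟩
  loopless := ⟨fun x h => h.1 rfl⟩

/-- `A` is the arc set of some directed cycle of `D`. We identify a directed cycle of `D`
with its set of arcs (which determines it up to rotation of the cyclic sequence). -/
def Digraph.IsDirCycleSet {V : Type*} (D : Digraph V) (A : Set (V × V)) : Prop :=
  ∃ n : ℕ, 1 ≤ n ∧ ∃ f : ZMod n → V, Function.Injective f ∧
    (∀ i, D.Adj (f i) (f (i + 1))) ∧ A = Set.range fun i => (f i, f (i + 1))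

/-- The set of vertices of a directed cycle, given by its arc set. -/
def cycleVerts {V : Type*} (A : Set (V × V)) : Set V := Prod.fst '' A

/-- The cycle graph `C(D)` of a digraph `D` : its vertices are the directed cycles of
`D`, two of them being adjacent iff they are distinct and share at least one vertex. -/
def Digraph.cycleGraph {V : Type*} (D : Digraph V) :
    SimpleGraph {A : Set (V × V) // D.IsDirCycleSet A} where
  Adj C₁ C₂ := C₁ ≠ C₂ ∧ (cycleVerts C₁.1 ∩ cycleVerts C₂.1).Nonempty
  symm := ⟨fun C₁ C₂ h => ⟨h.1.symm, by rw [Set.inter_comm]; exact h.2⟩⟩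
  loopless := ⟨fun C h => h.1 rfl⟩

/-- A graph is nearly transitive if for any two vertices `u, v` there is a graph
automorphism mapping `u` to `v` or to a neighbour of `v`. -/
def SimpleGraph.NearlyTransitive {W : Type*} (G : SimpleGraph W) : Prop :=
  ∀ u v : W, ∃ e : W ≃ W, (∀ x y, G.Adj (e x) (e y) ↔ G.Adj x y) ∧
    (e u = v ∨ G.Adj (e u) v)


lemma image_isDirCycleSet {V : Type*} (D : Digraph V) (e : V ≃ V)
    (he : ∀ x y, D.Adj (e x) (e y) ↔ D.Adj x y) {A : Set (V × V)}
    (hA : D.IsDirCycleSet A) : D.IsDirCycleSet (Prod.map e e '' A) := by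
  obtain ⟨n, hn, f, hf, hadj, hAeq⟩ := hA
  refine ⟨n, hn, e ∘ f, e.injective.comp hf, fun i => (he _ _).2 (hadj i), ?_⟩
  rw [hAeq, ← Set.range_comp]
  rfl

lemma cycleVerts_image {V : Type*} (e : V ≃ V) (A : Set (V × V)) :
    cycleVerts (Prod.map e e '' A) = e '' cycleVerts A := by
  unfold cycleVerts
  rw [Set.image_image, Set.image_image]
  rfl

lemma symm_preserves {V : Type*} (D : Digraph V) (e : V ≃ V)
    (he : ∀ x y, D.Adj (e x) (e y) ↔ D.Adj x y) :
    ∀ x y, D.Adj (e.symm x) (e.symm y) ↔ D.Adj x y := by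
  intro x y
  rw [← he (e.symm x) (e.symm y), e.apply_symm_apply, e.apply_symm_apply]

/-- The automorphism of the cycle graph induced by a digraph automorphism. -/
noncomputable def cycEquiv {V : Type*} (D : Digraph V) (e : V ≃ V)
    (he : ∀ x y, D.Adj (e x) (e y) ↔ D.Adj x y) :
    {A : Set (V × V) // D.IsDirCycleSet A} ≃ {A : Set (V × V) // D.IsDirCycleSet A} where
  toFun A := ⟨Prod.map e e '' A.1, image_isDirCycleSet D e he A.2⟩
  invFun A := ⟨Prod.map e.symm e.symm '' A.1,
    image_isDirCycleSet D e.symm (symm_preserves D e he) A.2⟩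
  left_inv A := by
    apply Subtype.ext
    show Prod.map ⇑e.symm ⇑e.symm '' (Prod.map ⇑e ⇑e '' A.1) = A.1
    rw [← Set.image_comp, Prod.map_comp_map]
    simp [Equiv.symm_comp_self, Equiv.self_comp_symm, Prod.map_id]
  right_inv A := by
    apply Subtype.ext
    show Prod.map ⇑e ⇑e '' (Prod.map ⇑e.symm ⇑e.symm '' A.1) = A.1
    rw [← Set.image_comp, Prod.map_comp_map]
    simp [Equiv.symm_comp_self, Equiv.self_comp_symm, Prod.map_id]

/-- For any connected vertex transitive digraph `D` on at least two vertices, its cycle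
graph `C(D)` is nearly transitive. -/
theorem cycleGraph_nearlyTransitive {V : Type*} [Fintype V] (D : Digraph V)
    (hirr : ∀ v : V, ¬ D.Adj v v)
    (hconn : D.underlying.Connected)
    (htrans : D.IsVertexTransitive)
    (hcard : 2 ≤ Fintype.card V) :
    D.cycleGraph.NearlyTransitive := by
  intro C₁ C₂
  -- pick a vertex in each cycle
  obtain ⟨n₁, hn₁, f₁, hf₁, hadj₁, hA₁⟩ := C₁.2
  obtain ⟨n₂, hn₂, f₂, hf₂, hadj₂, hA₂⟩ := C₂.2
  have hu : f₁ 0 ∈ cycleVerts C₁.1 := ⟨(f₁ 0, f₁ 1), by rw [hA₁]; exact ⟨0, by simp⟩, rfl⟩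
  have hv : f₂ 0 ∈ cycleVerts C₂.1 := ⟨(f₂ 0, f₂ 1), by rw [hA₂]; exact ⟨0, by simp⟩, rfl⟩
  obtain ⟨e, he, heq⟩ := htrans (f₁ 0) (f₂ 0)
  refine ⟨cycEquiv D e he, ?_, ?_⟩
  · intro X Y
    constructor
    · rintro ⟨hne, z, hz1, hz2⟩
      refine ⟨fun h => hne (by rw [h]), ?_⟩
      rw [cycEquiv] at hz1 hz2
      simp only [Equiv.coe_fn_mk, cycleVerts_image] at hz1 hz2
      obtain ⟨w, hw, rfl⟩ := hz1
      obtain ⟨w', hw', hww'⟩ := hz2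
      exact ⟨w, hw, by rwa [← e.injective hww']⟩
    · rintro ⟨hne, z, hz1, hz2⟩
      refine ⟨fun h => hne ?_, ?_⟩
      · have := congrArg (cycEquiv D e he).symm h
        simpa using this
      · refine ⟨e z, ?_, ?_⟩ <;>
        · rw [cycEquiv]
          simp only [Equiv.coe_fn_mk, cycleVerts_image]
          exact ⟨z, by assumption, rfl⟩
  · have hvmem : f₂ 0 ∈ cycleVerts ((cycEquiv D e he) C₁).1 := by
      rw [cycEquiv]
      simp only [Equiv.coe_fn_mk, cycleVerts_image]
      exact ⟨f₁ 0, hu, heq⟩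
    by_cases hcase : (cycEquiv D e he) C₁ = C₂
    · exact Or.inl hcase
    · exact Or.inr ⟨hcase, f₂ 0, hvmem, hv⟩
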